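/- Let l = (l_1, ..., l_n) be the topologically ordered path-length sequence of a finite topological binary tree with leaves v_1, ..., v_n. For every full segment S = [i,j] of l, the number 2^{m(S)} · K(S) is a positive integer, where m(S) is the neighborhood maximin parameter and K(S) = 2^{-l_i} + ... + 2^{-l_j} is the partial Kraft sum. -/

import Mathlib

/-- Minimum of the values `l i, ..., l j`. -/
def segMin (l : ℕ → ℕ) (i j : ℕ) : ℕ :=
  (Finset.Icc i j).fold min (l i) l

/-- Neighborhood maximin parameter `m[i,j]`: the maximum of `min(l h, ..., l k)` over
subintervals `[h,k]` of `[1,n]` properly containing `[i,j]`, with value `0` if there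
are none (in particular for `[i,j] = [1,n]`). -/
def nmaxim (l : ℕ → ℕ) (n i j : ℕ) : ℕ :=
  (((Finset.Icc 1 i) ×ˢ (Finset.Icc j n)).filter (fun p => p ≠ (i, j))).fold max 0
    (fun p => segMin l p.1 p.2)

/-- `[i,j]` is a full segment (island) of the sequence `l` restricted to `[1,n]`. -/
def IsFullSeg (l : ℕ → ℕ) (n i j : ℕ) : Prop :=
  1 ≤ i ∧ i ≤ j ∧ j ≤ n ∧ nmaxim l n i j < segMin l i j

/-- Partial Kraft sum `K[i,j] = 2^{-l_i} + ... + 2^{-l_j}`. -/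
noncomputable def kraft (l : ℕ → ℕ) (i j : ℕ) : ℝ :=
  ∑ k ∈ Finset.Icc i j, ((2:ℝ) ^ (l k))⁻¹

/-- A topological binary tree: every internal node has exactly a left and a right son. -/
inductive BTree : Type
  | leaf : BTree
  | node : BTree → BTree → BTree

/-- The left-to-right (topologically ordered) path-length sequence: depths of leaves. -/
def BTree.depths : BTree → List ℕ
  | .leaf => [0]
  | .node L R => (L.depths.map (· + 1)) ++ (R.depths.map (· + 1))

/-- The codewords of the leaves in left-to-right order (`false` = 0 = left, `true` = 1 = right). -/
def BTree.codes : BTree → List (List Bool)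
  | .leaf => [[]]
  | .node L R => (L.codes.map (List.cons false)) ++ (R.codes.map (List.cons true))

noncomputable def klist (L : List ℕ) : ℝ := (L.map fun d => ((2:ℝ) ^ d)⁻¹).sum

lemma klist_nil : klist [] = 0 := by simp [klist]

lemma klist_append (A B : List ℕ) : klist (A ++ B) = klist A + klist B := by
  simp [klist]

lemma klist_map_succ (M : List ℕ) : klist (M.map (· + 1)) = 2⁻¹ * klist M := by
  induction M with
  | nil => simp [klist]
  | cons d M ih =>
      simp only [List.map_cons, klist, List.sum_cons] at *
      rw [ih]; rw [pow_succ]; ring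

lemma klist_total (t : BTree) : klist t.depths = 1 := by
  induction t with
  | leaf => simp [BTree.depths, klist]
  | node L R ihL ihR =>
      simp [BTree.depths, klist_append, klist_map_succ, ihL, ihR]; norm_num

lemma depths_ne_nil (t : BTree) : t.depths.length ≥ 1 := by
  induction t with
  | leaf => simp [BTree.depths]
  | node L R ihL ihR => simp [BTree.depths]; omega

lemma core (t : BTree) : ∀ k < t.depths.length,
    ∃ z : ℕ, klist (t.depths.take k) * 2 ^ (t.depths.getD k 0) = z := by
  induction t with
  | leaf =>
      intro k hk
      simp [BTree.depths] at hk
      subst hk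
      exact ⟨0, by simp [klist]⟩
  | node L R ihL ihR =>
      intro k hk
      simp only [BTree.depths, List.length_append, List.length_map] at hk
      by_cases hka : k < L.depths.length
      · obtain ⟨z, hz⟩ := ihL k hka
        refine ⟨z, ?_⟩
        rw [BTree.depths]
        rw [List.take_append_of_le_length (by simpa using hka.le)]
        rw [List.getD_append _ _ _ _ (by simpa using hka)]
        rw [← List.map_take, klist_map_succ]
        have hg : (L.depths.map (· + 1)).getD k 0 = L.depths.getD k 0 + 1 := by
          rw [List.getD_eq_getElem _ _ (by simpa using hka),
              List.getD_eq_getElem _ _ hka, List.getElem_map]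
        rw [hg, pow_succ]
        calc 2⁻¹ * klist (L.depths.take k) * (2 ^ L.depths.getD k 0 * 2)
            = klist (L.depths.take k) * 2 ^ L.depths.getD k 0 := by ring
          _ = z := hz
      · push_neg at hka
        set a := L.depths.length
        obtain ⟨z, hz⟩ := ihR (k - a) (by omega)
        refine ⟨2 ^ R.depths.getD (k - a) 0 + z, ?_⟩
        rw [BTree.depths]
        rw [List.take_append]
        have hta : (L.depths.map (· + 1)).take k = L.depths.map (· + 1) := by
          apply List.take_of_length_le; simpa using hka
        rw [hta, klist_append]
        have h1 : klist (L.depths.map (· + 1)) = 2⁻¹ := by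
          rw [klist_map_succ, klist_total]; norm_num
        have hlen : (L.depths.map (· + 1)).length = a := by simp [a]
        rw [hlen]
        rw [List.getD_append_right _ _ _ _ (by omega)]
        rw [hlen]
        have hg : (R.depths.map (· + 1)).getD (k - a) 0 = R.depths.getD (k - a) 0 + 1 := by
          rw [List.getD_eq_getElem _ _ (by simp; omega),
              List.getD_eq_getElem _ _ (by omega), List.getElem_map]
        rw [h1, ← List.map_take, klist_map_succ, hg, pow_succ]
        push_cast
        calc (2⁻¹ + 2⁻¹ * klist (R.depths.take (k - a))) * (2 ^ R.depths.getD (k - a) 0 * 2)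
            = 2 ^ R.depths.getD (k - a) 0 + klist (R.depths.take (k - a)) * 2 ^ R.depths.getD (k - a) 0 := by ring
          _ = 2 ^ R.depths.getD (k - a) 0 + z := by rw [hz]

lemma coreb (t : BTree) : ∀ k, 1 ≤ k → k ≤ t.depths.length →
    ∃ z : ℕ, klist (t.depths.take k) * 2 ^ (t.depths.getD (k-1) 0) = z := by
  intro k h1 h2
  obtain ⟨k, rfl⟩ : ∃ k', k = k' + 1 := ⟨k - 1, by omega⟩
  obtain ⟨z, hz⟩ := core t k (by omega)
  refine ⟨z + 1, ?_⟩
  rw [List.take_succ]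
  have : t.depths[k]? = some (t.depths.getD k 0) := by
    rw [List.getD_eq_getElem _ _ (by omega)]
    exact List.getElem?_eq_getElem (by omega)
  rw [this]
  simp only [Option.toList_some, klist_append, Nat.add_sub_cancel]
  have : klist [t.depths.getD k 0] = (2 ^ (t.depths.getD k 0))⁻¹ := by simp [klist]
  rw [this]
  push_cast
  rw [add_mul, hz, inv_mul_cancel₀ (by positivity)]


theorem full_segment_scaled_kraft_is_posint (t : BTree) (n : ℕ) (l : ℕ → ℕ)
    (hn : n = t.depths.length)
    (hl : ∀ k ∈ Finset.Icc 1 n, l k = t.depths.getD (k - 1) 0)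
    (i j : ℕ) (h : IsFullSeg l n i j) :
    ∃ z : ℕ, 0 < z ∧ (2:ℝ) ^ (nmaxim l n i j) * kraft l i j = z := by
  obtain ⟨hi1, hij, hjn, hfull⟩ := h
  set m := nmaxim l n i j with hm
  -- partial sums over Icc equal klist of take
  have hsum : ∀ jj, jj ≤ n → ∑ k ∈ Finset.Icc 1 jj, ((2:ℝ) ^ (l k))⁻¹
      = klist (t.depths.take jj) := by
    intro jj hjj
    induction jj with
    | zero => simp [klist]
    | succ jj ih =>
        rw [Finset.sum_Icc_succ_top (by omega), ih (by omega)]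
        rw [List.take_succ]
        have hjl : jj < t.depths.length := by omega
        have : t.depths[jj]? = some (t.depths.getD jj 0) := by
          rw [List.getD_eq_getElem _ _ hjl]
          exact List.getElem?_eq_getElem hjl
        rw [this]
        simp only [Option.toList_some, klist_append]
        have hlj : l (jj + 1) = t.depths.getD jj 0 := by
          have := hl (jj + 1) (Finset.mem_Icc.mpr ⟨by omega, by omega⟩)
          simpa using this
        simp [klist, hlj]
  -- lower bound facts on segMin
  have segMin_le : ∀ x ∈ Finset.Icc i j, segMin l i j ≤ l x := fun x hx =>
    (Finset.fold_min_le _).mpr (Or.inr ⟨x, hx, le_rfl⟩)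
  -- neighbor depth bounds
  have hli : 2 ≤ i → l (i - 1) ≤ m := by
    intro h2
    have hmem : ((i - 1, j) : ℕ × ℕ) ∈
        ((Finset.Icc 1 i ×ˢ Finset.Icc j n).filter (fun p => p ≠ (i, j))) := by
      simp only [Finset.mem_filter, Finset.mem_product, Finset.mem_Icc, ne_eq, Prod.mk.injEq,
        not_and]
      omega
    have h1 : segMin l (i - 1) j ≤ m := by
      rw [hm]; unfold nmaxim
      exact (Finset.le_fold_max _).mpr (Or.inr ⟨_, hmem, le_rfl⟩)
    have h2' : min (l (i - 1)) (segMin l i j) ≤ segMin l (i - 1) j := by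
      unfold segMin
      refine (Finset.le_fold_min _).mpr ⟨min_le_left _ _, fun x hx => ?_⟩
      simp only [Finset.mem_Icc] at hx
      rcases Nat.eq_or_lt_of_le hx.1 with heq | hlt
      · rw [← heq]; exact min_le_left _ _
      · exact le_trans (min_le_right _ _) (segMin_le x (Finset.mem_Icc.mpr ⟨by omega, hx.2⟩))
    omega
  have hlj2 : j < n → l (j + 1) ≤ m := by
    intro h2
    have hmem : ((i, j + 1) : ℕ × ℕ) ∈
        ((Finset.Icc 1 i ×ˢ Finset.Icc j n).filter (fun p => p ≠ (i, j))) := by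
      simp only [Finset.mem_filter, Finset.mem_product, Finset.mem_Icc, ne_eq, Prod.mk.injEq,
        not_and]
      omega
    have h1 : segMin l i (j + 1) ≤ m := by
      rw [hm]; unfold nmaxim
      exact (Finset.le_fold_max _).mpr (Or.inr ⟨_, hmem, le_rfl⟩)
    have h2' : min (segMin l i j) (l (j + 1)) ≤ segMin l i (j + 1) := by
      unfold segMin
      refine (Finset.le_fold_min _).mpr
        ⟨le_trans (min_le_left _ _) (segMin_le i (Finset.mem_Icc.mpr ⟨le_rfl, hij⟩)),
         fun x hx => ?_⟩
      simp only [Finset.mem_Icc] at hx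
      rcases Nat.lt_or_ge x (j + 1) with hlt | hge
      · exact le_trans (min_le_left _ _) (segMin_le x (Finset.mem_Icc.mpr ⟨hx.1, by omega⟩))
      · have : x = j + 1 := by omega
        rw [this]; exact min_le_right _ _
    omega
  -- the two scaled prefix sums are naturals
  have hA : ∃ a : ℕ, (2:ℝ) ^ m * klist (t.depths.take j) = a := by
    rcases Nat.eq_or_lt_of_le hjn with rfl | hjn'
    · refine ⟨2 ^ m, ?_⟩
      rw [hn, List.take_length, klist_total]
      push_cast; ring
    · obtain ⟨z, hz⟩ := core t j (by omega)
      have hd : t.depths.getD j 0 = l (j + 1) := by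
        have := (hl (j + 1) (Finset.mem_Icc.mpr ⟨by omega, by omega⟩)).symm
        simpa using this
      have hle := hlj2 hjn'
      refine ⟨2 ^ (m - l (j + 1)) * z, ?_⟩
      have hpow : (2:ℝ) ^ m = 2 ^ (m - l (j + 1)) * 2 ^ (l (j + 1)) := by
        rw [← pow_add]; congr 1; omega
      rw [hpow]
      push_cast
      rw [mul_assoc, mul_comm ((2:ℝ) ^ (l (j+1))) _, ← mul_assoc, mul_assoc _ _ ((2:ℝ) ^ (l (j+1)))]
      rw [hd] at hz
      rw [hz]
  have hB : ∃ b : ℕ, (2:ℝ) ^ m * klist (t.depths.take (i - 1)) = b := by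
    rcases Nat.eq_or_lt_of_le hi1 with h1 | h2
    · refine ⟨0, ?_⟩
      rw [← h1]
      simp [klist]
    · obtain ⟨z, hz⟩ := coreb t (i - 1) (by omega) (by omega)
      have hd : t.depths.getD (i - 1 - 1) 0 = l (i - 1) := by
        exact (hl (i - 1) (Finset.mem_Icc.mpr ⟨by omega, by omega⟩)).symm
      have hle := hli h2
      refine ⟨2 ^ (m - l (i - 1)) * z, ?_⟩
      have hpow : (2:ℝ) ^ m = 2 ^ (m - l (i - 1)) * 2 ^ (l (i - 1)) := by
        rw [← pow_add]; congr 1; omega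
      rw [hpow]
      push_cast
      rw [mul_assoc, mul_comm ((2:ℝ) ^ (l (i-1))) _, ← mul_assoc,
        mul_assoc _ _ ((2:ℝ) ^ (l (i-1)))]
      rw [hd] at hz
      rw [hz]
  obtain ⟨a, ha⟩ := hA
  obtain ⟨b, hb⟩ := hB
  -- kraft as difference of prefix sums
  have hsplit : kraft l i j = klist (t.depths.take j) - klist (t.depths.take (i - 1)) := by
    rw [← hsum j hjn, ← hsum (i - 1) (by omega)]
    have hu : Finset.Icc 1 (i - 1) ∪ Finset.Icc i j = Finset.Icc 1 j := by
      ext x; simp only [Finset.mem_union, Finset.mem_Icc]; omega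
    have hdisj : Disjoint (Finset.Icc 1 (i - 1)) (Finset.Icc i j) := by
      rw [Finset.disjoint_left]
      intro x hx hx'
      simp only [Finset.mem_Icc] at hx hx'
      omega
    have := Finset.sum_union (f := fun k => ((2:ℝ) ^ (l k))⁻¹) hdisj
    rw [hu] at this
    rw [kraft, this]; ring
  have hpos : 0 < kraft l i j := by
    apply Finset.sum_pos (fun k _ => by positivity)
    exact Finset.nonempty_Icc.mpr hij
  have hkey : (2:ℝ) ^ m * kraft l i j = (a : ℝ) - b := by
    rw [hsplit, mul_sub, ha, hb]
  have hba : b < a := by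
    have h1 : (0:ℝ) < (a : ℝ) - b := by
      rw [← hkey]; positivity
    have : (b:ℝ) < a := by linarith
    exact_mod_cast this
  refine ⟨a - b, by omega, ?_⟩
  rw [hkey]
  push_cast [Nat.cast_sub hba.le]
  ring
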